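/- Let X be a geodesic metric space. Suppose there exists a quasi-geodesic line γ : ℝ → X and an increasing sequence (t_i) of positive integers such that for each i, γ(−t_i) and γ(t_i) can be connected by a continuous path that does not enter the ball of radius i around γ(0). Then X is not quasi-isometric to a simplicial tree. -/

import Mathlib

section TreeAux

open SimpleGraph Walk

variable {V : Type} {T : SimpleGraph V}

attribute [local instance] Classical.propDecidable

/-- The unique path between two vertices of a tree. -/
noncomputable def pth (hT : T.IsTree) (x y : V) : T.Walk x y :=
  (hT.existsUnique_path x y).exists.choose

lemma pth_isPath (hT : T.IsTree) (x y : V) : (pth hT x y).IsPath :=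
  (hT.existsUnique_path x y).exists.choose_spec

lemma pth_unique (hT : T.IsTree) {x y : V} (p : T.Walk x y) (hp : p.IsPath) :
    p = pth hT x y :=
  (hT.existsUnique_path x y).unique hp (pth_isPath hT x y)

lemma pth_length (hT : T.IsTree) (x y : V) : (pth hT x y).length = T.dist x y := by
  obtain ⟨W, hW⟩ := (hT.isConnected x y).exists_walk_length_eq_dist
  have h1 : W.bypass = pth hT x y := pth_unique hT _ (Walk.bypass_isPath W)
  have h2 : (pth hT x y).length ≤ T.dist x y := by
    rw [← h1, ← hW]; exact Walk.length_bypass_le W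
  exact le_antisymm h2 (SimpleGraph.dist_le _)

lemma pth_takeUntil_length (hT : T.IsTree) {x y m : V} (hm : m ∈ (pth hT x y).support) :
    ((pth hT x y).takeUntil m hm).length = T.dist x m ∧
    ((pth hT x y).dropUntil m hm).length = T.dist m y ∧
    T.dist x m + T.dist m y = T.dist x y := by
  have hsum : ((pth hT x y).takeUntil m hm).length + ((pth hT x y).dropUntil m hm).length
      = T.dist x y := by
    rw [← pth_length hT x y]
    conv_rhs => rw [← Walk.take_spec (pth hT x y) hm]
    exact (Walk.length_append _ _).symm
  have h1 : T.dist x m ≤ ((pth hT x y).takeUntil m hm).length := SimpleGraph.dist_le _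
  have h2 : T.dist m y ≤ ((pth hT x y).dropUntil m hm).length := SimpleGraph.dist_le _
  have h3 : T.dist x y ≤ T.dist x m + T.dist m y :=
    hT.isConnected.dist_triangle
  omega

lemma mem_support_dist (hT : T.IsTree) {x y m : V} (hm : m ∈ (pth hT x y).support) :
    T.dist x m + T.dist m y = T.dist x y :=
  (pth_takeUntil_length hT hm).2.2

lemma pth_rev (hT : T.IsTree) {x y m : V} (hm : m ∈ (pth hT x y).support) :
    m ∈ (pth hT y x).support := by
  have h : (pth hT x y).reverse = pth hT y x :=
    pth_unique hT _ ((pth_isPath hT x y).reverse)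
  rw [← h, Walk.support_reverse, List.mem_reverse]
  exact hm

lemma pth_mem_or_mem (hT : T.IsTree) (x y z : V) {m : V}
    (hm : m ∈ (pth hT x y).support) :
    m ∈ (pth hT x z).support ∨ m ∈ (pth hT z y).support := by
  set W : T.Walk x y := (pth hT x z).append (pth hT z y) with hW
  have hb : W.bypass = pth hT x y := pth_unique hT _ (Walk.bypass_isPath W)
  have h1 : m ∈ W.support := Walk.support_bypass_subset W (hb ▸ hm)
  rw [hW, Walk.mem_support_append_iff] at h1
  exact h1

lemma tree_median (hT : T.IsTree) (a b c : V) :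
    ∃ m : V, m ∈ (pth hT a b).support ∧ m ∈ (pth hT a c).support ∧
      m ∈ (pth hT b c).support := by
  obtain ⟨m, hmarg⟩ : ∃ m, m ∈ (pth hT a b).support.argmin (fun v => T.dist v c) := by
    cases h : (pth hT a b).support.argmin (fun v => T.dist v c) with
    | none => exact absurd (List.argmin_eq_none.mp h) (Walk.support_ne_nil _)
    | some m => exact ⟨m, rfl⟩
  have hmem : m ∈ (pth hT a b).support := List.argmin_mem hmarg
  have hmin : ∀ v ∈ (pth hT a b).support, T.dist m c ≤ T.dist v c :=
    fun v hv => List.le_of_mem_argmin hv hmarg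
  have key : ∀ (s : V) (S : T.Walk s m), S.IsPath →
      (∀ v ∈ S.support, v ∈ (pth hT a b).support) → m ∈ (pth hT s c).support := by
    intro s S hS hsub
    have hQ := pth_isPath hT m c
    have hdisj : ∀ v ∈ S.support, v ∉ (pth hT m c).support.tail := by
      intro v hv hvt
      have hvQ : v ∈ (pth hT m c).support := List.mem_of_mem_tail hvt
      have hne : v ≠ m := by
        rintro rfl
        have h4 := hQ.support_nodup
        rw [Walk.support_eq_cons] at h4
        exact (List.nodup_cons.mp h4).1 hvt
      have h1 := mem_support_dist hT hvQ
      have h2 := hmin v (hsub v hv)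
      have h3 : T.dist m v = 0 := by omega
      exact hne (((hT.isConnected m v).dist_eq_zero_iff.mp h3).symm)
    have hpath : (S.append (pth hT m c)).IsPath := by
      rw [Walk.isPath_def, Walk.support_append]
      exact List.Nodup.append hS.support_nodup
        ((List.tail_sublist _).nodup hQ.support_nodup)
        (fun v hv hvt => hdisj v hv hvt)
    have he := pth_unique hT _ hpath
    rw [← he, Walk.mem_support_append_iff]
    exact Or.inl (Walk.end_mem_support S)
  refine ⟨m, hmem, ?_, ?_⟩
  · exact key a ((pth hT a b).takeUntil m hmem) ((pth_isPath hT a b).takeUntil hmem)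
      (fun v hv => Walk.support_takeUntil_subset _ hmem hv)
  · exact key b ((pth hT a b).dropUntil m hmem).reverse
      (((pth_isPath hT a b).dropUntil hmem).reverse)
      (fun v hv => Walk.support_dropUntil_subset _ hmem
        (by rwa [Walk.support_reverse, List.mem_reverse] at hv))

lemma chain_lemma (hT : T.IsTree) (m : V) (D : ℝ) (hD : 0 ≤ D) :
    ∀ (n : ℕ) (v : ℕ → V), m ∈ (pth hT (v 0) (v n)).support →
      (∀ j, j < n → (T.dist (v j) (v (j+1)) : ℝ) ≤ D) →
      ∃ j, j ≤ n ∧ (T.dist (v j) m : ℝ) ≤ D := by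
  intro n
  induction n with
  | zero =>
    intro v hm _
    have hnil : (Walk.nil : T.Walk (v 0) (v 0)) = pth hT _ _ :=
      pth_unique hT _ (by simp)
    rw [← hnil] at hm
    have hm' : m = v 0 := by simpa using hm
    refine ⟨0, le_refl _, ?_⟩
    rw [hm', SimpleGraph.dist_self]
    exact_mod_cast hD
  | succ n ih =>
    intro v hm hjump
    rcases pth_mem_or_mem hT (v 0) (v (n+1)) (v 1) hm with h | h
    · refine ⟨0, Nat.zero_le _, ?_⟩
      have h1 := mem_support_dist hT h
      have h2 := hjump 0 (Nat.succ_pos n)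
      have h3 : (T.dist (v 0) m : ℝ) ≤ (T.dist (v 0) (v 1) : ℝ) := by
        exact_mod_cast by omega
      linarith
    · obtain ⟨j, hj, hd⟩ := ih (fun j => v (j+1)) h (fun j hj => hjump (j+1) (by omega))
      exact ⟨j+1, by omega, hd⟩

end TreeAux


/-- A metric space is geodesic if any two points are joined by an isometrically
embedded segment. -/
def IsGeodesicSpace (X : Type) [MetricSpace X] : Prop :=
  ∀ x y : X, ∃ γ : ℝ → X, γ 0 = x ∧ γ (dist x y) = y ∧
    ∀ s ∈ Set.Icc (0 : ℝ) (dist x y), ∀ t ∈ Set.Icc (0 : ℝ) (dist x y),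
      dist (γ s) (γ t) = |s - t|

/-- `γ` is a `(K,C)`-quasi-geodesic on the set `I ⊆ ℝ`. -/
def IsQuasiGeodesicOn {X : Type} [MetricSpace X] (K C : ℝ) (γ : ℝ → X) (I : Set ℝ) :
    Prop :=
  ∀ s ∈ I, ∀ t ∈ I,
    (1 / K) * |s - t| - C ≤ dist (γ s) (γ t) ∧ dist (γ s) (γ t) ≤ K * |s - t| + C

/-- `X` is a quasi-tree: there is a simplicial tree (with its path metric, here the
graph metric on its vertex set) and a quasi-isometry from `X` to it. -/
def IsQuasiTree (X : Type) [MetricSpace X] : Prop :=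
  ∃ (V : Type) (T : SimpleGraph V), T.IsTree ∧
    ∃ (φ : X → V) (lam eps : ℝ), 1 ≤ lam ∧ 0 ≤ eps ∧
      (∀ x y : X,
        (1 / lam) * dist x y - eps ≤ (T.dist (φ x) (φ y) : ℝ) ∧
          (T.dist (φ x) (φ y) : ℝ) ≤ lam * dist x y + eps) ∧
      (∀ v : V, ∃ x : X, (T.dist (φ x) v : ℝ) ≤ eps)

/-- Let `X` be a geodesic metric space.  Suppose there is a quasi-geodesic line
`γ : ℝ → X` and an increasing sequence `(t i)` of positive integers such that for each
`i`, `γ (-(t i))` and `γ (t i)` can be connected by a continuous path avoiding the ball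
of radius `i` around `γ 0`.  Then `X` is not quasi-isometric to a simplicial tree. -/
theorem not_quasiTree_of_detours
    {X : Type} [MetricSpace X] (hgeo : IsGeodesicSpace X)
    (K C : ℝ) (hK : 1 ≤ K) (hC : 0 ≤ C) (γ : ℝ → X)
    (hγ : IsQuasiGeodesicOn K C γ Set.univ)
    (t : ℕ → ℕ) (ht : StrictMono t) (htpos : ∀ i, 0 < t i)
    (detour : ∀ i : ℕ, ∃ p : Path (γ (-(t i : ℝ))) (γ (t i : ℝ)),
      ∀ s : unitInterval, (i : ℝ) ≤ dist (p s) (γ 0)) :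
    ¬ IsQuasiTree X := by
  rintro ⟨V, T, hT, φ, lam, eps, hlam, heps, hφ, -⟩
  have hlam0 : (0:ℝ) < lam := lt_of_lt_of_le one_pos hlam
  have hK0 : (0:ℝ) < K := lt_of_lt_of_le one_pos hK
  -- quasi-geodesic bounds
  have hQGu : ∀ s u : ℝ, dist (γ s) (γ u) ≤ K * |s - u| + C :=
    fun s u => (hγ s trivial u trivial).2
  have hQGl : ∀ s u : ℝ, (1/K) * |s - u| - C ≤ dist (γ s) (γ u) :=
    fun s u => (hγ s trivial u trivial).1
  have htri : ∀ x y z : V, (T.dist x z : ℝ) ≤ T.dist x y + T.dist y z := by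
    intro x y z; exact_mod_cast hT.isConnected.dist_triangle
  have hsym : ∀ x y : V, (T.dist x y : ℝ) = T.dist y x := by
    intro x y; rw [SimpleGraph.dist_comm]
  -- constants (opaque)
  obtain ⟨D0, hD0def⟩ : ∃ D0 : ℝ, D0 = lam*(K+C)+eps := ⟨_, rfl⟩
  have hD0 : 0 ≤ D0 := by
    have h1 : (0:ℝ) ≤ lam*(K+C) := mul_nonneg hlam0.le (by linarith)
    rw [hD0def]; linarith
  obtain ⟨D1, hD1def⟩ : ∃ D1 : ℝ, D1 = lam + eps := ⟨_, rfl⟩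
  have hD1 : 0 ≤ D1 := by rw [hD1def]; linarith
  obtain ⟨M0, hM0def⟩ : ∃ M0 : ℝ, M0 = K*(lam*(2*D0+eps)+C) := ⟨_, rfl⟩
  have hM0 : 0 ≤ M0 := by
    have h1 : (0:ℝ) ≤ lam*(2*D0+eps) := mul_nonneg hlam0.le (by linarith)
    rw [hM0def]; exact mul_nonneg hK0.le (by linarith)
  obtain ⟨R, hRdef⟩ : ∃ R : ℝ, R = lam*(K*M0+C)+eps+D0 := ⟨_, rfl⟩
  obtain ⟨i, hi⟩ := exists_nat_gt (lam*(R+eps+D1))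
  set n' : ℕ := t i with hn'def
  set w : V := φ (γ 0) with hwdef
  set a : V := φ (γ (-(n' : ℝ))) with hadef
  set b : V := φ (γ (n' : ℝ)) with hbdef
  obtain ⟨m, hmab, hmaw, hmbw⟩ := tree_median hT a b w
  -- Morse step: T.dist w m ≤ R
  have morse : (T.dist w m : ℝ) ≤ R := by
    set v1 : ℕ → V := fun j => φ (γ ((j:ℝ) - n')) with hv1
    set v2 : ℕ → V := fun j => φ (γ (j:ℝ)) with hv2
    have hv10 : v1 0 = a := by simp [hv1, hadef]
    have hv1n : v1 n' = w := by simp [hv1, hwdef]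
    have hv20 : v2 0 = w := by simp [hv2, hwdef]
    have hv2n : v2 n' = b := by simp [hv2, hbdef]
    have hjump1 : ∀ j, j < n' → (T.dist (v1 j) (v1 (j+1)) : ℝ) ≤ D0 := by
      intro j hj
      have habs : |((j:ℝ) - n') - (((j+1:ℕ):ℝ) - n')| = 1 := by
        push_cast
        rw [show ((j:ℝ) - n') - ((j+1) - n') = -1 by ring]
        norm_num
      have hX : dist (γ ((j:ℝ) - n')) (γ (((j+1:ℕ):ℝ) - n')) ≤ K + C := by
        have h0 := hQGu ((j:ℝ) - n') (((j+1:ℕ):ℝ) - n')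
        rw [habs] at h0; linarith
      have h2 := (hφ (γ ((j:ℝ) - n')) (γ (((j+1:ℕ):ℝ) - n'))).2
      have h3 := mul_le_mul_of_nonneg_left hX hlam0.le
      simp only [hv1]
      rw [hD0def]
      push_cast at h2 h3 ⊢
      linarith
    have hjump2 : ∀ j, j < n' → (T.dist (v2 j) (v2 (j+1)) : ℝ) ≤ D0 := by
      intro j hj
      have habs : |((j:ℝ)) - ((j+1:ℕ):ℝ)| = 1 := by
        push_cast
        rw [show ((j:ℝ)) - (j+1) = -1 by ring]
        norm_num
      have hX : dist (γ (j:ℝ)) (γ ((j+1:ℕ):ℝ)) ≤ K + C := by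
        have h0 := hQGu ((j:ℝ)) ((j+1:ℕ):ℝ)
        rw [habs] at h0; linarith
      have h2 := (hφ (γ (j:ℝ)) (γ ((j+1:ℕ):ℝ))).2
      have h3 := mul_le_mul_of_nonneg_left hX hlam0.le
      simp only [hv2]
      rw [hD0def]
      push_cast at h2 h3 ⊢
      linarith
    have hm1 : m ∈ (pth hT (v1 0) (v1 n')).support := by rw [hv10, hv1n]; exact hmaw
    have hm2 : m ∈ (pth hT (v2 0) (v2 n')).support := by rw [hv20, hv2n]; exact pth_rev hT hmbw
    obtain ⟨j, hj, hjd⟩ := chain_lemma hT m D0 hD0 n' v1 hm1 hjump1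
    obtain ⟨k, hk, hkd⟩ := chain_lemma hT m D0 hD0 n' v2 hm2 hjump2
    have h2D : (T.dist (v1 j) (v2 k) : ℝ) ≤ 2*D0 := by
      have h1 := htri (v1 j) m (v2 k)
      have h2 : (T.dist m (v2 k) : ℝ) = T.dist (v2 k) m := hsym m (v2 k)
      linarith
    have hXd : dist (γ ((j:ℝ) - n')) (γ (k:ℝ)) ≤ lam*(2*D0+eps) := by
      have hl := (hφ (γ ((j:ℝ) - n')) (γ (k:ℝ))).1
      have h1 : (1/lam) * dist (γ ((j:ℝ) - n')) (γ (k:ℝ)) ≤ 2*D0 + eps := by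
        simp only [hv1, hv2] at h2D; linarith
      have h2 := mul_le_mul_of_nonneg_left h1 hlam0.le
      rw [show lam * ((1/lam) * dist (γ ((j:ℝ) - n')) (γ (k:ℝ)))
        = dist (γ ((j:ℝ) - n')) (γ (k:ℝ)) by field_simp] at h2
      exact h2
    have habs2 : |((j:ℝ) - n') - k| ≤ M0 := by
      have hql := hQGl ((j:ℝ) - n') (k:ℝ)
      have h1 : (1/K) * |((j:ℝ) - n') - k| ≤ lam*(2*D0+eps) + C := by linarith
      have h2 := mul_le_mul_of_nonneg_left h1 hK0.le
      rw [show K * ((1/K) * |((j:ℝ) - n') - k|) = |((j:ℝ) - n') - k| by field_simp] at h2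
      rw [hM0def]
      exact h2
    have hjn : |(j:ℝ) - n'| ≤ M0 := by
      have h1 : (j:ℝ) ≤ n' := by exact_mod_cast hj
      have h2 : (0:ℝ) ≤ k := Nat.cast_nonneg k
      have h3 := abs_le.mp habs2
      exact abs_le.mpr ⟨by linarith [h3.1], by linarith⟩
    have hXw : dist (γ ((j:ℝ) - n')) (γ 0) ≤ K*M0 + C := by
      have h1 := hQGu ((j:ℝ) - n') 0
      rw [sub_zero] at h1
      have h2 := mul_le_mul_of_nonneg_left hjn hK0.le
      linarith
    have hTw : (T.dist (v1 j) w : ℝ) ≤ lam*(K*M0+C)+eps := by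
      have h1 := (hφ (γ ((j:ℝ) - n')) (γ 0)).2
      have h2 := mul_le_mul_of_nonneg_left hXw hlam0.le
      rw [← hwdef] at h1
      simp only [hv1]
      linarith
    have h1 := htri w (v1 j) m
    have h2 : (T.dist w (v1 j) : ℝ) = T.dist (v1 j) w := hsym w (v1 j)
    rw [hRdef]
    linarith
  -- Detour step
  obtain ⟨p, hp⟩ := detour i
  have hpc : UniformContinuous p := CompactSpace.uniformContinuous_of_continuous p.continuous
  obtain ⟨δ, hδ0, hδ⟩ := Metric.uniformContinuous_iff.mp hpc 1 one_pos
  obtain ⟨n, hn⟩ := exists_nat_gt (1/δ)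
  have hn0 : (0:ℝ) < n := lt_trans (div_pos one_pos hδ0) hn
  set σ : ℕ → unitInterval := fun j =>
    ⟨min ((j:ℝ)/n) 1, Set.mem_Icc.mpr
      ⟨le_min (div_nonneg (Nat.cast_nonneg j) hn0.le) zero_le_one, min_le_right _ _⟩⟩ with hσdef
  have hσ0 : σ 0 = 0 := by
    apply Subtype.ext; simp [hσdef]
  have hσn : σ n = 1 := by
    apply Subtype.ext
    simp [hσdef, div_self hn0.ne']
  set q : ℕ → V := fun j => φ (p (σ j)) with hqdef
  have hq0 : q 0 = a := by rw [hqdef]; simp only [hσ0, p.source]; rfl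
  have hqn : q n = b := by rw [hqdef]; simp only [hσn, p.target]; rfl
  have hjumpq : ∀ j, j < n → (T.dist (q j) (q (j+1)) : ℝ) ≤ D1 := by
    intro j hj
    have hclose : dist (σ j) (σ (j+1)) < δ := by
      rw [Subtype.dist_eq, Real.dist_eq]
      have e1 : min ((j:ℝ)/n) 1 = (j:ℝ)/n :=
        min_eq_left ((div_le_one hn0).mpr (by exact_mod_cast hj.le))
      have e2 : min (((j+1:ℕ):ℝ)/n) 1 = ((j+1:ℕ):ℝ)/n :=
        min_eq_left ((div_le_one hn0).mpr (by exact_mod_cast hj))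
      simp only [hσdef, e1, e2]
      push_cast
      have e3 : (j:ℝ)/n - ((j:ℝ)+1)/n = -(1/n) := by ring
      rw [e3, abs_neg, abs_of_nonneg (by positivity : (0:ℝ) ≤ 1/(n:ℝ))]
      rw [div_lt_iff₀ hn0]
      have h5 : δ * (1/δ) < δ * n := mul_lt_mul_of_pos_left hn hδ0
      have h6 : δ * (1/δ) = 1 := by field_simp
      linarith
    have hX : dist (p (σ j)) (p (σ (j+1))) ≤ 1 := (hδ hclose).le
    have h2 := (hφ (p (σ j)) (p (σ (j+1)))).2
    have h3 := mul_le_mul_of_nonneg_left hX hlam0.le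
    simp only [hqdef]
    rw [hD1def]
    linarith
  have hmq : m ∈ (pth hT (q 0) (q n)).support := by rw [hq0, hqn]; exact hmab
  obtain ⟨j', hj', hjd'⟩ := chain_lemma hT m D1 hD1 n q hmq hjumpq
  have hfar : (i:ℝ)/lam - eps ≤ (T.dist (q j') w : ℝ) := by
    have h1 := (hφ (p (σ j')) (γ 0)).1
    have h2 := hp (σ j')
    have h3 := mul_le_mul_of_nonneg_left h2 (one_div_nonneg.mpr hlam0.le)
    have h4 : (i:ℝ)/lam = (1/lam) * i := by ring
    rw [← hwdef] at h1
    simp only [hqdef]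
    rw [h4]
    linarith
  have hwm : (i:ℝ)/lam - eps - D1 ≤ (T.dist w m : ℝ) := by
    have h1 := htri (q j') m w
    have h2 : (T.dist m w : ℝ) = T.dist w m := hsym m w
    have h3 : (T.dist (q j') w : ℝ) = T.dist w (q j') := hsym (q j') w
    linarith
  have hfin : (i:ℝ)/lam - eps - D1 ≤ R := le_trans hwm morse
  have hfin2 : (i:ℝ) ≤ lam*(R+eps+D1) := by
    have h := mul_le_mul_of_nonneg_left hfin hlam0.le
    have h6 : lam * ((i:ℝ)/lam) = (i:ℝ) := by field_simp
    have h7 : lam * ((i:ℝ)/lam - eps - D1) = lam*((i:ℝ)/lam) - lam*eps - lam*D1 := by ring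
    have h8 : lam*(R+eps+D1) = lam*R + lam*eps + lam*D1 := by ring
    rw [h7, h6] at h
    linarith
  linarith
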